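/- arXiv:2107.14675 — 3 statements merged into one kernel-verified Lean document; each statement's English description precedes it below -/
import Mathlib

section
/- Let a = (ABC, A, C, f^[α], g^[β]) be a regular overlap ambiguity (so A, C are nonempty words, lm(f) = AB, lm(g) = BC, and s(αC) ≠ s(Aβ)). Then the signature of the S-polynomial spol(a) = (1/lc(f)) f^[α] C − (1/lc(g)) A g^[β] strictly exceeds both s(α) and s(β): s(spol(a)) ≻ max{s(α), s(β)}. -/
open Finsupp

/-- The free algebra `K⟨X⟩`, realized as the monoid algebra of the free monoid. -/
abbrev FreeAlg (K X : Type*) [Field K] := MonoidAlgebra K (FreeMonoid X)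

/-- Module monomials `a εᵢ b` of the free bimodule of rank `r`. -/
structure MonMod (X : Type*) (r : ℕ) where
  left : FreeMonoid X
  idx : Fin r
  right : FreeMonoid X

/-- The free bimodule `Σ = (K⟨X⟩ ⊗ K⟨X⟩)^r`, realized as the span of module monomials. -/
abbrev FreeBimod (K X : Type*) [Field K] (r : ℕ) := MonMod X r →₀ K

/-- Two-sided action of a pair of words on a module monomial: `a·(c εᵢ d)·b = (ac) εᵢ (db)`. -/
def act {X : Type*} {r : ℕ} (a b : FreeMonoid X) (μ : MonMod X r) : MonMod X r :=
  ⟨a * μ.left, μ.idx, μ.right * b⟩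

/-- The monomial `w` as an element of the free algebra. -/
noncomputable def mon (K : Type*) [Field K] {X : Type*} (w : FreeMonoid X) : FreeAlg K X :=
  MonoidAlgebra.of K (FreeMonoid X) w

/-- The evaluation homomorphism `Σ → K⟨X⟩`, `εᵢ ↦ fᵢ`. -/
noncomputable def evalS {K X : Type*} [Field K] {r : ℕ} (F : Fin r → FreeAlg K X)
    (α : FreeBimod K X r) : FreeAlg K X :=
  α.sum fun μ c => c • (mon K μ.left * F μ.idx * mon K μ.right)

section Orders

variable {K X : Type*} [Field K] [LinearOrder (FreeMonoid X)] {r : ℕ}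
  [LinearOrder (MonMod X r)]

/-- The signature of a module element: the largest module monomial of its support
(`⊥` for the zero element). -/
noncomputable def sigW (α : FreeBimod K X r) : WithBot (MonMod X r) := α.support.max

/-- The leading monomial of a nonzero polynomial (junk value `1` for `0`). -/
noncomputable def lmon (p : FreeAlg K X) : FreeMonoid X :=
  if h : p.coeff.support.Nonempty then p.coeff.support.max' h else 1

/-- The leading coefficient. -/
noncomputable def lcoeff (p : FreeAlg K X) : K := p.coeff (lmon p)

/-- The leading term. -/
noncomputable def lterm (p : FreeAlg K X) : FreeAlg K X :=
  MonoidAlgebra.single (lmon p) (lcoeff p)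

/-- `f^[α]` is top s-reducible by the set `G^[Σ]`. -/
def TopSRed (G : Set (FreeAlg K X × FreeBimod K X r)) (f : FreeAlg K X)
    (α : FreeBimod K X r) : Prop :=
  ∃ g γ, (g, γ) ∈ G ∧ g ≠ 0 ∧ ∃ a b : FreeMonoid X,
    a * lmon g * b = lmon f ∧ WithBot.map (act a b) (sigW γ) ≤ sigW α

/-- `f^[α]` is singular top s-reducible by `G^[Σ]`. -/
def SingTopSRed (G : Set (FreeAlg K X × FreeBimod K X r)) (f : FreeAlg K X)
    (α : FreeBimod K X r) : Prop :=
  f ≠ 0 ∧ ∃ g γ, (g, γ) ∈ G ∧ g ≠ 0 ∧ ∃ a b : FreeMonoid X,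
    a * lmon g * b = lmon f ∧ WithBot.map (act a b) (sigW γ) = sigW α

/-- `f^[α]` admits a regular s-reduction by `G^[Σ]`. -/
def RegSRedible (G : Set (FreeAlg K X × FreeBimod K X r)) (f : FreeAlg K X)
    (α : FreeBimod K X r) : Prop :=
  ∃ g γ, (g, γ) ∈ G ∧ g ≠ 0 ∧ ∃ a b : FreeMonoid X,
    a * lmon g * b ∈ f.coeff.support ∧ WithBot.map (act a b) (sigW γ) < sigW α

/-- `f^[α]` admits a regular *top* s-reduction by `G^[Σ]`. -/
def RegTopSRedible (G : Set (FreeAlg K X × FreeBimod K X r)) (f : FreeAlg K X)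
    (α : FreeBimod K X r) : Prop :=
  f ≠ 0 ∧ ∃ g γ, (g, γ) ∈ G ∧ g ≠ 0 ∧ ∃ a b : FreeMonoid X,
    a * lmon g * b = lmon f ∧ WithBot.map (act a b) (sigW γ) < sigW α

/-- Result of one s-reduction step of `f^[α]` by `a g^[γ] b`. -/
noncomputable def sredResult (f : FreeAlg K X) (α : FreeBimod K X r)
    (g : FreeAlg K X) (γ : FreeBimod K X r) (a b : FreeMonoid X) :
    FreeAlg K X × FreeBimod K X r :=
  (f - (f.coeff (a * lmon g * b) * (lcoeff g)⁻¹) • (mon K a * g * mon K b),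
   α - (f.coeff (a * lmon g * b) * (lcoeff g)⁻¹) • Finsupp.mapDomain (act a b) γ)

/-- One s-reduction step by `G^[Σ]`. -/
def SRedStep (G : Set (FreeAlg K X × FreeBimod K X r))
    (p q : FreeAlg K X × FreeBimod K X r) : Prop :=
  ∃ g γ, (g, γ) ∈ G ∧ g ≠ 0 ∧ ∃ a b : FreeMonoid X,
    a * lmon g * b ∈ p.1.coeff.support ∧ WithBot.map (act a b) (sigW γ) ≤ sigW p.2 ∧
    q = sredResult p.1 p.2 g γ a b

/-- One *regular* s-reduction step by `G^[Σ]`. -/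
def RegSRedStep (G : Set (FreeAlg K X × FreeBimod K X r))
    (p q : FreeAlg K X × FreeBimod K X r) : Prop :=
  ∃ g γ, (g, γ) ∈ G ∧ g ≠ 0 ∧ ∃ a b : FreeMonoid X,
    a * lmon g * b ∈ p.1.coeff.support ∧ WithBot.map (act a b) (sigW γ) < sigW p.2 ∧
    q = sredResult p.1 p.2 g γ a b

/-- `p` s-reduces to zero by `G^[Σ]`. -/
def SRedToZero (G : Set (FreeAlg K X × FreeBimod K X r))
    (p : FreeAlg K X × FreeBimod K X r) : Prop :=
  ∃ σ : FreeBimod K X r, Relation.ReflTransGen (SRedStep G) p (0, σ)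

/-- `p` regular s-reduces to zero by `G^[Σ]`. -/
def RegSRedToZero (G : Set (FreeAlg K X × FreeBimod K X r))
    (p : FreeAlg K X × FreeBimod K X r) : Prop :=
  ∃ σ : FreeBimod K X r, Relation.ReflTransGen (RegSRedStep G) p (0, σ)

/-- `G^[Σ] ⊆ I^[Σ]`: labelled polynomials with nonzero polynomial part. -/
def InLab (F : Fin r → FreeAlg K X) (G : Set (FreeAlg K X × FreeBimod K X r)) : Prop :=
  ∀ p ∈ G, p.1 = evalS F p.2 ∧ p.1 ≠ 0

/-- `G^[Σ]` is a labelled Gröbner basis of `I^[Σ]`. -/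
def LabGB (F : Fin r → FreeAlg K X) (G : Set (FreeAlg K X × FreeBimod K X r)) : Prop :=
  InLab F G ∧ ∀ (f : FreeAlg K X) (α : FreeBimod K X r), f = evalS F α → SRedToZero G (f, α)

/-- `G^[Σ]` is a labelled Gröbner basis of `I^[Σ]` up to signature `σ`. -/
def LabGBUpTo (F : Fin r → FreeAlg K X) (G : Set (FreeAlg K X × FreeBimod K X r))
    (σ : MonMod X r) : Prop :=
  InLab F G ∧ ∀ (f : FreeAlg K X) (α : FreeBimod K X r), f = evalS F α →
    sigW α < (σ : WithBot (MonMod X r)) → SRedToZero G (f, α)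

/-- `G^[Σ]` is a *minimal* labelled Gröbner basis of `I^[Σ]`. -/
def MinLabGB (F : Fin r → FreeAlg K X) (G : Set (FreeAlg K X × FreeBimod K X r)) : Prop :=
  LabGB F G ∧ ∀ p ∈ G, ¬ TopSRed (G \ {p}) p.1 p.2

end Orders


section Helpers

variable {X : Type*} {r : ℕ} [LinearOrder (FreeMonoid X)] [WellFoundedLT (FreeMonoid X)]
  [LinearOrder (MonMod X r)]

set_option linter.unusedSectionVars false

theorem one_lt_of_ne' (hmon : ∀ a b u v : FreeMonoid X, u ≤ v → a * u * b ≤ a * v * b)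
    (u : FreeMonoid X) (hu : u ≠ 1) : 1 < u := by
  rcases lt_or_ge 1 u with h | h
  · exact h
  · exfalso
    have hlt : u < 1 := lt_of_le_of_ne h hu
    have key : ∀ n : ℕ, u ^ (n+1) < u ^ n := by
      intro n
      have := hmon (u ^ n) 1 u 1 hlt.le
      simp only [mul_one] at this
      refine lt_of_le_of_ne (by simpa [pow_succ] using this) ?_
      intro heq
      exact hu (mul_left_cancel (a := u ^ n) (by simpa [pow_succ] using heq))
    exact (RelEmbedding.natGT (fun n => u ^ n) key).not_wellFounded
      wellFounded_lt

theorem act_injective' (a b : FreeMonoid X) : Function.Injective (act (r := r) a b) := by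
  rintro ⟨l₁, i₁, r₁⟩ ⟨l₂, i₂, r₂⟩ h
  simp only [act, MonMod.mk.injEq] at h ⊢
  exact ⟨mul_left_cancel h.1, h.2.1, mul_right_cancel h.2.2⟩

theorem lt_act_right' (hmon : ∀ a b u v : FreeMonoid X, u ≤ v → a * u * b ≤ a * v * b)
    (hmod : ∀ (a b : FreeMonoid X) (μ ν : MonMod X r), μ ≤ ν → act a b μ ≤ act a b ν)
    (hcomp : ∀ (u v : FreeMonoid X) (i : Fin r),
      (u ≤ v ↔ (⟨u, i, 1⟩ : MonMod X r) ≤ ⟨v, i, 1⟩) ∧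
      (u ≤ v ↔ (⟨1, i, u⟩ : MonMod X r) ≤ ⟨1, i, v⟩))
    (C : FreeMonoid X) (hC : C ≠ 1) (μ : MonMod X r) : μ < act 1 C μ := by
  obtain ⟨l, i, rt⟩ := μ
  have h1 : rt ≤ rt * C := by
    simpa using hmon rt 1 1 C (one_lt_of_ne' hmon C hC).le
  have h2 : (⟨1, i, rt⟩ : MonMod X r) ≤ ⟨1, i, rt * C⟩ := ((hcomp rt (rt * C) i).2).mp h1
  have h3 := hmod l 1 _ _ h2
  simp only [act, mul_one, one_mul] at h3 ⊢
  refine lt_of_le_of_ne h3 ?_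
  intro heq
  rw [MonMod.mk.injEq] at heq
  exact hC (mul_left_cancel (a := rt) (by simpa using heq.2.2.symm))

theorem lt_act_left' (hmon : ∀ a b u v : FreeMonoid X, u ≤ v → a * u * b ≤ a * v * b)
    (hmod : ∀ (a b : FreeMonoid X) (μ ν : MonMod X r), μ ≤ ν → act a b μ ≤ act a b ν)
    (hcomp : ∀ (u v : FreeMonoid X) (i : Fin r),
      (u ≤ v ↔ (⟨u, i, 1⟩ : MonMod X r) ≤ ⟨v, i, 1⟩) ∧
      (u ≤ v ↔ (⟨1, i, u⟩ : MonMod X r) ≤ ⟨1, i, v⟩))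
    (A : FreeMonoid X) (hA : A ≠ 1) (μ : MonMod X r) : μ < act A 1 μ := by
  obtain ⟨l, i, rt⟩ := μ
  have h1 : l ≤ A * l := by
    simpa using hmon 1 l 1 A (one_lt_of_ne' hmon A hA).le
  have h2 : (⟨l, i, 1⟩ : MonMod X r) ≤ ⟨A * l, i, 1⟩ := ((hcomp l (A * l) i).1).mp h1
  have h3 := hmod 1 rt _ _ h2
  simp only [act, mul_one, one_mul] at h3 ⊢
  refine lt_of_le_of_ne h3 ?_
  intro heq
  rw [MonMod.mk.injEq] at heq
  exact hA (mul_right_cancel (b := l) (by simpa using heq.1.symm))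

theorem sig_smul_mapDomain {K : Type*} [Field K]
    (hmod : ∀ (a b : FreeMonoid X) (μ ν : MonMod X r), μ ≤ ν → act a b μ ≤ act a b ν)
    (a b : FreeMonoid X) (c : K) (hc : c ≠ 0) (α : FreeBimod K X r) :
    sigW (c • Finsupp.mapDomain (act a b) α) = WithBot.map (act a b) (sigW α) := by
  classical
  unfold sigW
  rw [Finsupp.support_smul_eq hc, Finsupp.mapDomain_support_of_injective (act_injective' a b)]
  rcases α.support.eq_empty_or_nonempty with h | h
  · simp [h]
  · have hmono : Monotone (act (r := r) a b) := fun μ ν hμν => hmod a b μ ν hμν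
    have h' : (α.support.image (act a b)).Nonempty := h.image _
    rw [← Finset.coe_max' h, ← Finset.coe_max' h', Finset.max'_image hmono]
    rfl

theorem sig_sub_ge {K : Type*} [Field K] (p q : FreeBimod K X r)
    (h : sigW q < sigW p) : sigW p ≤ sigW (p - q) := by
  classical
  rcases hm : (sigW p) with _ | μ
  · rw [hm] at h; exact absurd h not_lt_bot
  · have hμp : μ ∈ p.support := Finset.mem_of_max hm
    have hqμ : q μ = 0 := by
      by_contra hq
      have : (μ : WithBot (MonMod X r)) ≤ sigW q :=
        Finset.le_max (Finsupp.mem_support_iff.mpr hq)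
      exact absurd (this.trans_lt h) (by rw [hm]; exact lt_irrefl _)
    have hmem : μ ∈ (p - q).support := by
      rw [Finsupp.mem_support_iff, Finsupp.sub_apply, hqμ, sub_zero]
      exact Finsupp.mem_support_iff.mp hμp
    exact Finset.le_max hmem

end Helpers

/-- Let `(ABC, A, C, f^[α], g^[β])` be a regular overlap ambiguity (`A, B, C` nonempty,
`lm(f) = AB`, `lm(g) = BC`, `s(αC) ≠ s(Aβ)`). Then the signature of the S-polynomial
`spol = (1/lc f) f^[α] C − (1/lc g) A g^[β]` strictly exceeds both `s(α)` and `s(β)`. -/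
theorem sig_regular_spol_gt {K X : Type*} [Field K] {r : ℕ}
    [LinearOrder (FreeMonoid X)] [WellFoundedLT (FreeMonoid X)]
    [LinearOrder (MonMod X r)] [WellFoundedLT (MonMod X r)]
    (hmon : ∀ a b u v : FreeMonoid X, u ≤ v → a * u * b ≤ a * v * b)
    (hmod : ∀ (a b : FreeMonoid X) (μ ν : MonMod X r), μ ≤ ν → act a b μ ≤ act a b ν)
    (hcomp : ∀ (u v : FreeMonoid X) (i : Fin r),
      (u ≤ v ↔ (⟨u, i, 1⟩ : MonMod X r) ≤ ⟨v, i, 1⟩) ∧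
      (u ≤ v ↔ (⟨1, i, u⟩ : MonMod X r) ≤ ⟨1, i, v⟩))
    (F : Fin r → FreeAlg K X)
    (f g : FreeAlg K X) (α β : FreeBimod K X r)
    (hf : f = evalS F α) (hg : g = evalS F β) (hf0 : f ≠ 0) (hg0 : g ≠ 0)
    (A B C : FreeMonoid X) (hA : A ≠ 1) (hB : B ≠ 1) (hC : C ≠ 1)
    (hlf : lmon f = A * B) (hlg : lmon g = B * C)
    (hreg : WithBot.map (act 1 C) (sigW α) ≠ WithBot.map (act A 1) (sigW β)) :
    max (sigW α) (sigW β) <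
      sigW ((lcoeff f)⁻¹ • Finsupp.mapDomain (act 1 C) α -
            (lcoeff g)⁻¹ • Finsupp.mapDomain (act A 1) β) := by
  classical
  have hα : α ≠ 0 := by
    intro h0; exact hf0 (by simp [hf, h0, evalS])
  have hβ : β ≠ 0 := by
    intro h0; exact hg0 (by simp [hg, h0, evalS])
  have hcf : (lcoeff f)⁻¹ ≠ 0 := by
    refine inv_ne_zero ?_
    have hne : f.coeff.support.Nonempty :=
      Finsupp.support_nonempty_iff.mpr (mt MonoidAlgebra.coeff_eq_zero.mp hf0)
    have : lmon f ∈ f.coeff.support := by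
      rw [lmon, dif_pos hne]; exact f.coeff.support.max'_mem hne
    exact Finsupp.mem_support_iff.mp this
  have hcg : (lcoeff g)⁻¹ ≠ 0 := by
    refine inv_ne_zero ?_
    have hne : g.coeff.support.Nonempty :=
      Finsupp.support_nonempty_iff.mpr (mt MonoidAlgebra.coeff_eq_zero.mp hg0)
    have : lmon g ∈ g.coeff.support := by
      rw [lmon, dif_pos hne]; exact g.coeff.support.max'_mem hne
    exact Finsupp.mem_support_iff.mp this
  set p := (lcoeff f)⁻¹ • Finsupp.mapDomain (act 1 C) α with hp
  set q := (lcoeff g)⁻¹ • Finsupp.mapDomain (act A 1) β with hq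
  have hsp : sigW p = WithBot.map (act 1 C) (sigW α) :=
    sig_smul_mapDomain hmod 1 C _ hcf α
  have hsq : sigW q = WithBot.map (act A 1) (sigW β) :=
    sig_smul_mapDomain hmod A 1 _ hcg β
  obtain ⟨sA, hsA⟩ : ∃ sA : MonMod X r, sigW α = (sA : WithBot (MonMod X r)) := by
    have hne : α.support.Nonempty := Finsupp.support_nonempty_iff.mpr hα
    exact ⟨α.support.max' hne, (Finset.coe_max' hne).symm⟩
  obtain ⟨sB, hsB⟩ : ∃ sB : MonMod X r, sigW β = (sB : WithBot (MonMod X r)) := by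
    have hne : β.support.Nonempty := Finsupp.support_nonempty_iff.mpr hβ
    exact ⟨β.support.max' hne, (Finset.coe_max' hne).symm⟩
  have hαlt : sigW α < sigW p := by
    rw [hsp, hsA, WithBot.map_coe, WithBot.coe_lt_coe]
    exact lt_act_right' hmon hmod hcomp C hC sA
  have hβlt : sigW β < sigW q := by
    rw [hsq, hsB, WithBot.map_coe, WithBot.coe_lt_coe]
    exact lt_act_left' hmon hmod hcomp A hA sB
  have hne : sigW p ≠ sigW q := by rw [hsp, hsq]; exact hreg
  rcases hne.lt_or_gt with hlt | hlt
  · -- sigW p < sigW q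
    have hge : sigW q ≤ sigW (p - q) := by
      have := sig_sub_ge q p hlt
      have hsupp : (q - p).support = (p - q).support := by
        rw [show q - p = -(p - q) from (neg_sub p q).symm, Finsupp.support_neg]
      unfold sigW at this ⊢
      rwa [hsupp] at this
    exact max_lt (lt_of_lt_of_le (hαlt.trans hlt) hge) (lt_of_lt_of_le hβlt hge)
  · have hge : sigW p ≤ sigW (p - q) := sig_sub_ge p q hlt
    exact max_lt (lt_of_lt_of_le hαlt hge) (lt_of_lt_of_le (hβlt.trans hlt) hge)
end

section
/- If G^[Σ] is a minimal labelled Gröbner basis of I^[Σ] and H^[Σ] is any labelled Gröbner basis of I^[Σ], then for every g^[γ] ∈ G^[Σ] there exists h^[δ] ∈ H^[Σ] with lm(g) = lm(h) and s(γ) = s(δ). -/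
open Finsupp

section AuxLemmas

variable {K X : Type*} [Field K] {r : ℕ} [LinearOrder (FreeMonoid X)]
  [LinearOrder (MonMod X r)]

theorem lmon_mem_support {p : FreeAlg K X} (hp : p ≠ 0) : lmon p ∈ p.coeff.support := by
  rw [lmon, dif_pos (Finsupp.support_nonempty_iff.mpr (by simpa using hp))]
  exact Finset.max'_mem _ _

theorem le_lmon {p : FreeAlg K X} {w : FreeMonoid X} (hw : w ∈ p.coeff.support) : w ≤ lmon p := by
  have hp : p.coeff.support.Nonempty := ⟨w, hw⟩
  rw [lmon, dif_pos hp]; exact Finset.le_max' _ _ hw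

theorem lmon_eq {p : FreeAlg K X} {L : FreeMonoid X} (hL : L ∈ p.coeff.support)
    (h : ∀ w ∈ p.coeff.support, w ≤ L) : lmon p = L := by
  refine le_antisymm (h _ (lmon_mem_support ?_)) (le_lmon hL)
  rintro rfl; simp at hL

theorem mon_mul_mon (a b : FreeMonoid X) (g : FreeAlg K X) :
    (mon K a * g * mon K b).coeff = Finsupp.mapDomain (fun u => a * u * b) g.coeff := by
  rw [← MonoidAlgebra.ofCoeff_coeff g]
  induction g.coeff using Finsupp.induction_linear with
  | zero => simp
  | add f g hf hg =>
    rw [MonoidAlgebra.ofCoeff_add, mul_add, add_mul, MonoidAlgebra.coeff_add, hf, hg,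
      Finsupp.mapDomain_add]
  | single u c =>
    simp only [mon, MonoidAlgebra.of_apply, Finsupp.mapDomain_single, MonoidAlgebra.ofCoeff_single]
    rw [MonoidAlgebra.single_mul_single, MonoidAlgebra.single_mul_single, one_mul, mul_one]
    rfl

theorem support_smul_mon_subset (c : K) (a b : FreeMonoid X) (g : FreeAlg K X) :
    (c • (mon K a * g * mon K b)).coeff.support ⊆ g.coeff.support.image (fun u => a * u * b) := by
  classical
  refine Finsupp.support_smul.trans ?_
  show (mon K a * g * mon K b).coeff.support ⊆ _
  rw [mon_mul_mon]
  exact Finsupp.mapDomain_support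

theorem sigW_sub_le (x y : FreeBimod K X r) : sigW (x - y) ≤ sigW x ⊔ sigW y := by
  classical
  refine le_trans (Finset.max_mono Finsupp.support_sub) ?_
  rw [Finset.max_union]
  exact le_rfl

theorem sigW_smul_le (c : K) (y : FreeBimod K X r) : sigW (c • y) ≤ sigW y :=
  Finset.max_mono Finsupp.support_smul

theorem sigW_mapDomain_le {f : MonMod X r → MonMod X r} (hf : Monotone f)
    (γ : FreeBimod K X r) :
    sigW (Finsupp.mapDomain f γ) ≤ WithBot.map f (sigW γ) := by
  classical
  apply Finset.max_le
  intro μ hμ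
  obtain ⟨ν, hν, rfl⟩ := Finset.mem_image.mp (Finsupp.mapDomain_support hμ)
  have h1 : γ.support.Nonempty := ⟨ν, hν⟩
  have h2 : sigW γ = (γ.support.max' h1 : WithBot (MonMod X r)) := (Finset.coe_max' h1).symm
  rw [h2, WithBot.map_coe, WithBot.coe_le_coe]
  exact hf (Finset.le_max' _ _ hν)

theorem act_act (a b c d : FreeMonoid X) (μ : MonMod X r) :
    act a b (act c d μ) = act (a * c) (d * b) μ := by
  simp [act, mul_assoc]

theorem withbot_map_map (f g : MonMod X r → MonMod X r) (x : WithBot (MonMod X r)) :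
    WithBot.map f (WithBot.map g x) = WithBot.map (f ∘ g) x := by
  cases x <;> rfl

theorem exists_top {K X : Type*} [Field K] {r : ℕ}
    [LinearOrder (FreeMonoid X)] [LinearOrder (MonMod X r)]
    (hmon : ∀ a b u v : FreeMonoid X, u ≤ v → a * u * b ≤ a * v * b)
    (hmod : ∀ (a b : FreeMonoid X) (μ ν : MonMod X r), μ ≤ ν → act a b μ ≤ act a b ν)
    {G : Set (FreeAlg K X × FreeBimod K X r)} {p₀ : FreeAlg K X × FreeBimod K X r}
    {σ : FreeBimod K X r}
    (hred : Relation.ReflTransGen (SRedStep G) p₀ (0, σ)) :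
    p₀.1 ≠ 0 → TopSRed G p₀.1 p₀.2 := by
  induction hred using Relation.ReflTransGen.head_induction_on with
  | refl => intro hne; exact absurd rfl hne
  | head hstep _ ih =>
    rename_i p c _
    intro hne
    obtain ⟨g, γ, hgG, hg0, a, b, hw, hsig, hq⟩ := hstep
    by_cases hcase : a * lmon g * b = lmon p.1
    · exact ⟨g, γ, hgG, hg0, a, b, hcase, hsig⟩
    · classical
      set L := lmon p.1 with hLdef
      have hlt : a * lmon g * b < L := lt_of_le_of_ne (le_lmon hw) hcase
      set cc : K := p.1.coeff (a * lmon g * b) * (lcoeff g)⁻¹ with hcc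
      set q : FreeAlg K X := cc • (mon K a * g * mon K b) with hqdef
      have hqlt : ∀ w ∈ q.coeff.support, w < L := by
        intro w hwq
        obtain ⟨u, hu, rfl⟩ := Finset.mem_image.mp (support_smul_mon_subset cc a b g hwq)
        exact lt_of_le_of_lt (hmon a b _ _ (le_lmon hu)) hlt
      have hqL : q.coeff L = 0 := by
        by_contra h
        exact lt_irrefl L (hqlt L (Finsupp.mem_support_iff.mpr h))
      have hfL : p.1.coeff L ≠ 0 := Finsupp.mem_support_iff.mp (lmon_mem_support hne)
      have hc1 : c.1 = p.1 - q := by rw [hq]; rfl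
      have hc1L : c.1.coeff L = p.1.coeff L := by rw [hc1, MonoidAlgebra.coeff_sub, Finsupp.sub_apply, hqL, sub_zero]
      have hne' : c.1 ≠ 0 := by
        intro h; rw [h] at hc1L; exact hfL (by simpa using hc1L.symm)
      have hLsupp : L ∈ c.1.coeff.support := Finsupp.mem_support_iff.mpr (hc1L ▸ hfL)
      have hlm' : lmon c.1 = L := by
        refine lmon_eq hLsupp ?_
        intro w hw'
        rw [hc1, MonoidAlgebra.coeff_sub] at hw'
        rcases Finset.mem_union.mp (Finsupp.support_sub hw') with h | h
        · exact le_lmon h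
        · exact (hqlt w h).le
      have hsig' : sigW c.2 ≤ sigW p.2 := by
        have hc2 : c.2 = p.2 - cc • Finsupp.mapDomain (act a b) γ := by rw [hq]; rfl
        rw [hc2]
        refine le_trans (sigW_sub_le _ _) (sup_le le_rfl ?_)
        refine le_trans (sigW_smul_le _ _) (le_trans (sigW_mapDomain_le ?_ γ) hsig)
        intro μ ν h; exact hmod a b μ ν h
      obtain ⟨h, δ, hH, hh0, a2, b2, heq, hs⟩ := ih hne'
      exact ⟨h, δ, hH, hh0, a2, b2, by rw [heq, hlm'], le_trans hs hsig'⟩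

end AuxLemmas


/-- If `G^[Σ]` is a minimal labelled Gröbner basis of `I^[Σ]` and `H^[Σ]` is any
labelled Gröbner basis of `I^[Σ]`, then for every `g^[γ] ∈ G^[Σ]` there exists
`h^[δ] ∈ H^[Σ]` with `lm(g) = lm(h)` and `s(γ) = s(δ)`. -/
theorem minimal_labGB_matching {K X : Type*} [Field K] {r : ℕ}
    [LinearOrder (FreeMonoid X)] [WellFoundedLT (FreeMonoid X)]
    [LinearOrder (MonMod X r)] [WellFoundedLT (MonMod X r)]
    (hmon : ∀ a b u v : FreeMonoid X, u ≤ v → a * u * b ≤ a * v * b)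
    (hmod : ∀ (a b : FreeMonoid X) (μ ν : MonMod X r), μ ≤ ν → act a b μ ≤ act a b ν)
    (hcomp : ∀ (u v : FreeMonoid X) (i : Fin r),
      (u ≤ v ↔ (⟨u, i, 1⟩ : MonMod X r) ≤ ⟨v, i, 1⟩) ∧
      (u ≤ v ↔ (⟨1, i, u⟩ : MonMod X r) ≤ ⟨1, i, v⟩))
    (F : Fin r → FreeAlg K X) (G H : Set (FreeAlg K X × FreeBimod K X r))
    (hG : MinLabGB F G) (hH : LabGB F H) :
    ∀ p ∈ G, ∃ q ∈ H, lmon p.1 = lmon q.1 ∧ sigW p.2 = sigW q.2 := by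
  
  intro p hp
  obtain ⟨hpev, hpne⟩ := hG.1.1 p hp
  obtain ⟨σ, hchain⟩ := hH.2 p.1 p.2 hpev
  obtain ⟨h, δ, hhH, hh0, a, b, hab, hs1⟩ := exists_top hmon hmod hchain hpne
  obtain ⟨hev, -⟩ := hH.1 (h, δ) hhH
  obtain ⟨σ', hchain'⟩ := hG.1.2 h δ hev
  obtain ⟨g', γ', hg'G, hg'0, c, d, hcd, hs2⟩ := exists_top hmon hmod hchain' hh0
  have hkey : (g', γ') = p := by
    by_contra hne
    apply hG.2 p hp
    refine ⟨g', γ', ⟨hg'G, by simpa using hne⟩, hg'0, a * c, d * b, ?_, ?_⟩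
    · calc a * c * lmon g' * (d * b) = a * (c * lmon g' * d) * b := by
            simp [mul_assoc]
        _ = lmon p.1 := by rw [hcd, hab]
    · calc WithBot.map (act (a * c) (d * b)) (sigW γ')
            = WithBot.map (act a b) (WithBot.map (act c d) (sigW γ')) := by
              rw [withbot_map_map]; congr 1; funext μ; exact (act_act a b c d μ).symm
        _ ≤ WithBot.map (act a b) (sigW δ) :=
            (WithBot.monotone_map_iff.mpr (fun μ ν hμν => hmod a b μ ν hμν)) hs2
        _ ≤ sigW p.2 := hs1
  have hg'1 : g' = p.1 := congrArg Prod.fst hkey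
  have hγ'2 : γ' = p.2 := congrArg Prod.snd hkey
  rw [hg'1] at hcd
  rw [hγ'2] at hs2
  have hlen : a * (c * lmon p.1 * d) * b = lmon p.1 := by rw [hcd, hab]
  have hL := congrArg FreeMonoid.length hlen
  simp only [FreeMonoid.length_mul] at hL
  have ha : a = 1 := FreeMonoid.length_eq_zero.mp (by omega)
  have hb : b = 1 := FreeMonoid.length_eq_zero.mp (by omega)
  have hc : c = 1 := FreeMonoid.length_eq_zero.mp (by omega)
  have hd : d = 1 := FreeMonoid.length_eq_zero.mp (by omega)
  subst ha hb hc hd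
  have hlm : lmon p.1 = lmon h := by rw [← hcd, one_mul, mul_one]
  have hact : act (1 : FreeMonoid X) (1 : FreeMonoid X) = (id : MonMod X r → MonMod X r) := by
    funext μ; simp [act]
  have hmapid : ∀ x : WithBot (MonMod X r), WithBot.map (act (1:FreeMonoid X) 1) x = x := by
    intro x; rw [hact]; cases x <;> rfl
  rw [hmapid] at hs1 hs2
  exact ⟨(h, δ), hhH, hlm, le_antisymm hs2 hs1⟩
end

section
/- In K⟨x,y⟩ with f₁ = xyx − xy, f₂ = yxy, f₃ = xyy − xxy, the polynomials g_n = y x^{n+2} y belong to the ideal I = (f₁,f₂,f₃) for all n ≥ 0. -/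
/-- The two-sided ideal of `A` generated by `S`: all finite sums `Σ aᵢ fᵢ bᵢ`
with `fᵢ ∈ S` and `aᵢ, bᵢ ∈ A`. -/
def twoSidedSpan {A : Type*} [Ring A] (S : Set A) : Set A :=
  (AddSubgroup.closure {x : A | ∃ a f b, f ∈ S ∧ x = a * f * b} : Set A)

lemma twoSidedSpan_gen {A : Type*} [Ring A] {S : Set A} {f : A} (hf : f ∈ S) (a b : A) :
    a * f * b ∈ twoSidedSpan S :=
  AddSubgroup.subset_closure ⟨a, f, b, hf, rfl⟩

lemma twoSidedSpan_sub {A : Type*} [Ring A] {S : Set A} {u v : A}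
    (hu : u ∈ twoSidedSpan S) (hv : v ∈ twoSidedSpan S) : u - v ∈ twoSidedSpan S :=
  AddSubgroup.sub_mem _ hu hv

lemma twoSidedSpan_mul_right {A : Type*} [Ring A] {S : Set A} {u : A}
    (hu : u ∈ twoSidedSpan S) (c : A) : u * c ∈ twoSidedSpan S := by
  induction hu using AddSubgroup.closure_induction with
  | mem z hz =>
      obtain ⟨a, f, b, hf, rfl⟩ := hz
      rw [mul_assoc]
      exact twoSidedSpan_gen hf a (b * c)
  | zero => rw [zero_mul]; exact AddSubgroup.zero_mem _
  | add u v hu hv ihu ihv =>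
      rw [add_mul]; exact AddSubgroup.add_mem _ ihu ihv
  | neg u hu ihu =>
      rw [neg_mul]; exact AddSubgroup.neg_mem _ ihu

/-- In `K⟨x,y⟩` with `f₁ = xyx − xy`, `f₂ = yxy`, `f₃ = xyy − xxy`, the polynomials
`gₙ = y x^{n+2} y` belong to the two-sided ideal `I = (f₁,f₂,f₃)` for all `n ≥ 0`. -/
theorem gn_mem_ideal (K : Type*) [Field K]
    (x y f₁ f₂ f₃ : FreeAlgebra K (Fin 2))
    (hx : x = FreeAlgebra.ι K 0) (hy : y = FreeAlgebra.ι K 1)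
    (hf₁ : f₁ = x * y * x - x * y) (hf₂ : f₂ = y * x * y) (hf₃ : f₃ = x * y * y - x * x * y) :
    ∀ n : ℕ, y * x ^ (n + 2) * y ∈ twoSidedSpan {f₁, f₂, f₃} := by
  intro n
  induction n with
  | zero =>
      have key : y * x ^ 2 * y = 1 * f₂ * y - y * f₃ * 1 := by
        rw [hf₂, hf₃]; noncomm_ring
      rw [key]
      exact twoSidedSpan_sub
        (twoSidedSpan_gen (by simp : f₂ ∈ ({f₁, f₂, f₃} : Set _)) 1 y)
        (twoSidedSpan_gen (by simp : f₃ ∈ ({f₁, f₂, f₃} : Set _)) y 1)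
  | succ n ih =>
      have key : y * x ^ (n + 3) * y
          = (y * x ^ (n + 2) * y) * y - (y * x ^ (n + 1)) * f₃ * 1 := by
        rw [hf₃]
        have h2 : x ^ (n + 2) = x ^ (n + 1) * x := pow_succ x (n + 1)
        have h3 : x ^ (n + 3) = x ^ (n + 1) * x * x := by
          rw [pow_succ, pow_succ]
        rw [h2, h3]
        noncomm_ring
      rw [key]
      exact twoSidedSpan_sub (twoSidedSpan_mul_right ih y)
        (twoSidedSpan_gen (by simp : f₃ ∈ ({f₁, f₂, f₃} : Set _)) (y * x ^ (n + 1)) 1)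
end
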